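/- Let ν be a Borel probability measure on P([0,1]^d) such that for every finite set F of words over Λ and every Borel set A ⊆ [0,1]^F, ν({ μ : (μ(Q_w))_{w∈F} ∈ A }) = ℙ({ x : (L(x,w))_{w∈F} ∈ A }). Then for every Borel set E ⊆ [0,1]^d, the function μ ↦ μ(E) is ν-measurable and ∫_{P([0,1]^d)} μ(E) dν(μ) = λ_d(E), where λ_d is d-dimensional Lebesgue measure. -/

import Mathlib

open MeasureTheory Filter Set
open scoped ENNReal NNReal

/-- The alphabet `Λ = {0,1}^d`, identified with `{0,…,2^d−1}`. -/
abbrev Lam (d : ℕ) := Fin d → Bool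

/-- Finite words over the alphabet `Λ` (including the empty word). -/
abbrev Wd (d : ℕ) := List (Lam d)

/-- The ambient space `ℝ^{2^d}` (with the Euclidean metric), coordinates indexed by `Λ`. -/
abbrev Pt (d : ℕ) := EuclideanSpace ℝ (Lam d)

/-- The simplex `Δ = {x : x_a ≥ 0, Σ_a x_a = 1}` in `ℝ^{2^d}`. -/
def simplexSet (d : ℕ) : Set (Pt d) := {p | (∀ a, 0 ≤ p a) ∧ (∑ a, p a) = 1}

/-- The uniform probability distribution `σ` on the simplex: the normalized restriction to
`Δ` of the `(2^d − 1)`-dimensional Hausdorff measure on `ℝ^{2^d}`. -/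
noncomputable def sigmaMeas (d : ℕ) : Measure (Pt d) :=
  ((Measure.hausdorffMeasure ((2 ^ d : ℝ) - 1) : Measure (Pt d)) (simplexSet d))⁻¹ •
    ((Measure.hausdorffMeasure ((2 ^ d : ℝ) - 1) : Measure (Pt d)).restrict (simplexSet d))

/-- Auxiliary recursion for labels: `labelFrom d x pre w` is the product, over the letters of
`w`, of the coordinates of `x` along the path starting at the node `pre`. -/
noncomputable def labelFrom (d : ℕ) (x : Wd d → Pt d) : Wd d → Wd d → ℝ
  | _, [] => 1
  | pre, a :: w => x pre a * labelFrom d x (pre ++ [a]) w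

/-- The label `L(x,w) = Π_{j=1}^{k} x(w_1⋯w_{j−1})_{w_j}` of the word `w` (empty word ↦ 1). -/
noncomputable def label (d : ℕ) (x : Wd d → Pt d) (w : Wd d) : ℝ := labelFrom d x [] w

/-- The lower corner of the dyadic cube of the word `w`: `a_i = Σ_j w_j(i) 2^{−j}`. -/
noncomputable def dyadicA (d : ℕ) (w : Wd d) (i : Fin d) : ℝ :=
  ∑ j : Fin w.length, (if w.get j i then ((2 : ℝ) ^ (j.val + 1))⁻¹ else 0)

/-- The dyadic cube `Q_w ⊆ [0,1]^d` of generation `|w|`: product of the intervals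
`[a_i, a_i + 2^{−k})`, taken as `[a_i, 1]` when `a_i + 2^{−k} = 1`. -/
noncomputable def Qcube (d : ℕ) (w : Wd d) : Set (Fin d → ℝ) :=
  {y | ∀ i, dyadicA d w i ≤ y i ∧
       (y i < dyadicA d w i + ((2 : ℝ) ^ w.length)⁻¹ ∨
        (dyadicA d w i + ((2 : ℝ) ^ w.length)⁻¹ = 1 ∧ y i ≤ 1))}

/-- Borel measurable structure on the space `P([0,1]^d)` of Borel probability measures on
`[0,1]^d` with the topology of weak convergence. -/
noncomputable instance (d : ℕ) :
    MeasurableSpace (ProbabilityMeasure (Set.Icc (0 : Fin d → ℝ) 1)) := borel _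

lemma dyadicA_eq_range (d : ℕ) (w : Wd d) (i : Fin d) :
    dyadicA d w i = ∑ j ∈ Finset.range w.length,
      (if (w.getD j (fun _ => false)) i then ((2 : ℝ) ^ (j + 1))⁻¹ else 0) := by
  rw [dyadicA, ← Fin.sum_univ_eq_sum_range]
  apply Finset.sum_congr rfl
  intro j _
  congr 2
  rw [List.getD_eq_getElem _ _ j.isLt, List.get_eq_getElem]

lemma dyadicA_nil (d : ℕ) (i : Fin d) : dyadicA d [] i = 0 := by simp [dyadicA]

lemma dyadicA_append (d : ℕ) (w : Wd d) (a : Lam d) (i : Fin d) :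
    dyadicA d (w ++ [a]) i
      = dyadicA d w i + (if a i then ((2 : ℝ) ^ (w.length + 1))⁻¹ else 0) := by
  rw [dyadicA_eq_range, dyadicA_eq_range]
  have hl : (w ++ [a]).length = w.length + 1 := by simp
  rw [hl, Finset.sum_range_succ]
  congr 1
  · apply Finset.sum_congr rfl
    intro j hj
    have hj' : j < w.length := Finset.mem_range.mp hj
    congr 2
    rw [List.getD_eq_getElem _ _ (by simpa using Nat.lt_succ_of_lt hj'),
      List.getD_eq_getElem _ _ hj', List.getElem_append_left hj']
  · congr 1
    rw [List.getD_eq_getElem _ _ (by simp)]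
    simp

lemma dyadicA_rep (d : ℕ) (w : Wd d) (i : Fin d) :
    ∃ m : ℕ, dyadicA d w i = m * ((2 : ℝ) ^ w.length)⁻¹ ∧ m + 1 ≤ 2 ^ w.length := by
  induction w using List.reverseRecOn with
  | nil => exact ⟨0, by simp [dyadicA_nil], by simp⟩
  | append_singleton w a ih =>
    obtain ⟨m, hm, hm2⟩ := ih
    refine ⟨2 * m + (if a i then 1 else 0), ?_, ?_⟩
    · rw [dyadicA_append, hm]
      have : ((2:ℝ) ^ w.length)⁻¹ = 2 * ((2:ℝ) ^ (w.length + 1))⁻¹ := by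
        rw [pow_succ]; field_simp
      simp only [List.length_append, List.length_singleton]
      rw [this]
      push_cast
      by_cases h : a i <;> simp [h] <;> ring
    · have : 2 * m + (if a i then 1 else 0) + 1 ≤ 2 * (m + 1) := by
        by_cases h : a i <;> simp [h] <;> omega
      calc _ ≤ 2 * (m+1) := this
        _ ≤ 2 * 2 ^ w.length := by omega
        _ = 2 ^ (w ++ [a]).length := by simp [pow_succ]; ring

lemma dyadicA_nonneg (d : ℕ) (w : Wd d) (i : Fin d) : 0 ≤ dyadicA d w i := by
  obtain ⟨m, hm, _⟩ := dyadicA_rep d w i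
  rw [hm]; positivity

lemma dyadicA_add_le_one (d : ℕ) (w : Wd d) (i : Fin d) :
    dyadicA d w i + ((2 : ℝ) ^ w.length)⁻¹ ≤ 1 := by
  obtain ⟨m, hm, hm2⟩ := dyadicA_rep d w i
  rw [hm]
  have h2 : (0:ℝ) < 2 ^ w.length := by positivity
  rw [← add_one_mul]
  rw [← le_div_iff₀]  -- maybe wrong direction
  · rw [one_div, inv_inv]
    calc ((m:ℝ)+1) ≤ ((2:ℝ)^w.length) := by exact_mod_cast hm2
      _ = _ := rfl
  · positivity

lemma dyadicA_half_ne_one (d : ℕ) (w : Wd d) (i : Fin d) :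
    dyadicA d w i + ((2 : ℝ) ^ (w.length + 1))⁻¹ ≠ 1 := by
  obtain ⟨m, hm, _⟩ := dyadicA_rep d w i
  rw [hm]
  intro h
  have h2 : (0:ℝ) < 2 ^ (w.length+1) := by positivity
  have hm' : ((2:ℝ) ^ w.length)⁻¹ = 2 * ((2:ℝ) ^ (w.length + 1))⁻¹ := by
    rw [pow_succ]; field_simp
  rw [hm', ← mul_assoc, ← add_one_mul] at h
  have : ((m:ℝ) * 2 + 1) = 2 ^ (w.length+1) := by
    field_simp at h
    linarith [h]
  have : (2 * m + 1 : ℕ) = 2 ^ (w.length + 1) := by exact_mod_cast (by push_cast; linarith [this] : ((2*m+1 : ℕ):ℝ) = ((2 ^ (w.length+1) : ℕ) : ℝ))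
  omega

lemma two_pow_succ_inv (k : ℕ) : ((2:ℝ) ^ k)⁻¹ = ((2:ℝ)^(k+1))⁻¹ + ((2:ℝ)^(k+1))⁻¹ := by
  rw [pow_succ]; field_simp; ring

lemma mem_Qcube_append {d : ℕ} {w : Wd d} {a : Lam d} {y : Fin d → ℝ} :
    y ∈ Qcube d (w ++ [a]) ↔ ∀ i,
      dyadicA d w i + (if a i then ((2:ℝ)^(w.length+1))⁻¹ else 0) ≤ y i ∧
      (y i < dyadicA d w i + (if a i then ((2:ℝ)^(w.length+1))⁻¹ else 0) + ((2:ℝ)^(w.length+1))⁻¹ ∨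
       (dyadicA d w i + (if a i then ((2:ℝ)^(w.length+1))⁻¹ else 0) + ((2:ℝ)^(w.length+1))⁻¹ = 1 ∧ y i ≤ 1)) := by
  simp only [Qcube, mem_setOf_eq, dyadicA_append, List.length_append, List.length_singleton]

/-- one-step refinement: membership in child cube implies membership in parent cube. -/
lemma Qcube_append_subset (d : ℕ) (w : Wd d) (a : Lam d) :
    Qcube d (w ++ [a]) ⊆ Qcube d w := by
  intro y hy
  rw [mem_Qcube_append] at hy
  intro i
  obtain ⟨h1, h2⟩ := hy i
  set A := dyadicA d w i with hA
  set h := ((2:ℝ)^(w.length+1))⁻¹ with hh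
  have hpos : 0 < h := by rw [hh]; positivity
  have hsum : ((2:ℝ) ^ w.length)⁻¹ = h + h := two_pow_succ_inv w.length
  by_cases hai : a i = true
  · rw [if_pos hai] at h1 h2
    refine ⟨le_trans (by linarith) h1, ?_⟩
    rcases h2 with h2 | ⟨h2, h3⟩
    · left; rw [hsum]; linarith
    · right; exact ⟨by rw [hsum]; linarith, h3⟩
  · rw [if_neg hai] at h1 h2
    rw [add_zero] at h1 h2
    refine ⟨h1, ?_⟩
    left
    rcases h2 with h2 | ⟨h2, h3⟩
    · rw [hsum]; linarith
    · exact absurd h2 (dyadicA_half_ne_one d w i)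

/-- one-step existence. -/
lemma Qcube_exists_append {d : ℕ} {w : Wd d} {y : Fin d → ℝ} (hy : y ∈ Qcube d w) :
    y ∈ Qcube d (w ++ [fun i => decide (dyadicA d w i + ((2:ℝ)^(w.length+1))⁻¹ ≤ y i)]) := by
  rw [mem_Qcube_append]
  intro i
  obtain ⟨h1, h2⟩ := hy i
  set A := dyadicA d w i with hA
  set h := ((2:ℝ)^(w.length+1))⁻¹ with hh
  have hpos : 0 < h := by rw [hh]; positivity
  have hsum : ((2:ℝ) ^ w.length)⁻¹ = h + h := two_pow_succ_inv w.length
  simp only [decide_eq_true_eq]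
  by_cases hd : A + h ≤ y i
  · rw [if_pos hd]
    refine ⟨hd, ?_⟩
    rcases h2 with h2 | ⟨h2, h3⟩
    · left; rw [hsum] at h2; linarith
    · right; exact ⟨by rw [hsum] at h2; linarith, h3⟩
  · rw [if_neg hd]
    push_neg at hd
    rw [add_zero]
    exact ⟨h1, Or.inl hd⟩

/-- one-step uniqueness. -/
lemma Qcube_append_unique {d : ℕ} {w : Wd d} {a b : Lam d} {y : Fin d → ℝ}
    (ha : y ∈ Qcube d (w ++ [a])) (hb : y ∈ Qcube d (w ++ [b])) : a = b := by
  rw [mem_Qcube_append] at ha hb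
  funext i
  obtain ⟨ha1, ha2⟩ := ha i
  obtain ⟨hb1, hb2⟩ := hb i
  set A := dyadicA d w i with hA
  set h := ((2:ℝ)^(w.length+1))⁻¹ with hh
  have hpos : 0 < h := by rw [hh]; positivity
  have hne : A + h ≠ 1 := dyadicA_half_ne_one d w i
  have key : ∀ {u v : Bool}, u = true → v = false →
      ((A + if u = true then h else 0) ≤ y i) →
      (y i < (A + if v = true then h else 0) + h ∨
        ((A + if v = true then h else 0) + h = 1 ∧ y i ≤ 1)) → False := by
    intro u v hu hv h1 h2
    rw [if_pos hu] at h1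
    rw [if_neg (by rw [hv]; exact Bool.false_ne_true)] at h2
    rw [add_zero] at h2
    rcases h2 with h2 | ⟨h2, _⟩
    · linarith
    · exact hne h2
  cases hai : a i <;> cases hbi : b i
  · rfl
  · exact absurd (key hbi hai hb1 ha2) not_false
  · exact absurd (key hai hbi ha1 hb2) not_false
  · rfl

lemma mem_Qcube_nil {d : ℕ} {y : Fin d → ℝ} (hy : y ∈ Set.Icc (0 : Fin d → ℝ) 1) :
    y ∈ Qcube d [] := by
  intro i
  rw [dyadicA_nil]
  simp only [List.length_nil, pow_zero, inv_one, zero_add]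
  exact ⟨hy.1 i, Or.inr ⟨trivial, hy.2 i⟩⟩

lemma Qcube_prefix_subset (d : ℕ) (w u : Wd d) : Qcube d (w ++ u) ⊆ Qcube d w := by
  induction u using List.reverseRecOn with
  | nil => simp
  | append_singleton u a ih =>
    calc Qcube d (w ++ (u ++ [a])) = Qcube d ((w ++ u) ++ [a]) := by rw [List.append_assoc]
      _ ⊆ Qcube d (w ++ u) := Qcube_append_subset d (w ++ u) a
      _ ⊆ Qcube d w := ih

lemma Qcube_mem_bounds {d : ℕ} {w : Wd d} {y : Fin d → ℝ} (hy : y ∈ Qcube d w) (i : Fin d) :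
    dyadicA d w i ≤ y i ∧ y i ≤ dyadicA d w i + ((2:ℝ) ^ w.length)⁻¹ := by
  obtain ⟨h1, h2⟩ := hy i
  refine ⟨h1, ?_⟩
  rcases h2 with h2 | ⟨h2, h3⟩
  · linarith
  · rw [h2]; exact h3

lemma Qcube_subset_Icc (d : ℕ) (w : Wd d) :
    Qcube d w ⊆ Set.Icc (0 : Fin d → ℝ) 1 := by
  intro y hy
  constructor <;> intro i
  · exact le_trans (dyadicA_nonneg d w i) (Qcube_mem_bounds hy i).1
  · exact le_trans (Qcube_mem_bounds hy i).2 (dyadicA_add_le_one d w i)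

/-- existence and uniqueness of the generation-`k` cube of a point of `[0,1]^d`. -/
lemma Qcube_existsUnique {d : ℕ} {y : Fin d → ℝ} (hy : y ∈ Set.Icc (0 : Fin d → ℝ) 1)
    (k : ℕ) : ∃! w : Wd d, w.length = k ∧ y ∈ Qcube d w := by
  induction k with
  | zero =>
    refine ⟨[], ⟨rfl, mem_Qcube_nil hy⟩, ?_⟩
    intro w ⟨hw, _⟩
    exact List.eq_nil_of_length_eq_zero hw
  | succ k ih =>
    obtain ⟨w, ⟨hwl, hwy⟩, huniq⟩ := ih
    refine ⟨w ++ [fun i => decide (dyadicA d w i + ((2:ℝ)^(w.length+1))⁻¹ ≤ y i)],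
      ⟨by simp [hwl], Qcube_exists_append hwy⟩, ?_⟩
    intro v ⟨hvl, hvy⟩
    have hv : v ≠ [] := by intro h; rw [h] at hvl; simp at hvl
    obtain ⟨u, b, rfl⟩ : ∃ u b, v = u ++ [b] := by
      refine ⟨v.dropLast, v.getLast hv, ?_⟩
      rw [List.dropLast_append_getLast hv]
    have hul : u.length = k := by
      rw [List.length_append, List.length_singleton] at hvl; omega
    have huy : y ∈ Qcube d u := Qcube_append_subset d u b hvy
    have : u = w := huniq u ⟨hul, huy⟩
    subst this
    congr 1
    rw [Qcube_append_unique hvy (Qcube_exists_append hwy)]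

lemma Qcube_eq_pi (d : ℕ) (w : Wd d) :
    Qcube d w = Set.pi Set.univ (fun i =>
      if dyadicA d w i + ((2:ℝ) ^ w.length)⁻¹ = 1
      then Set.Icc (dyadicA d w i) 1
      else Set.Ico (dyadicA d w i) (dyadicA d w i + ((2:ℝ) ^ w.length)⁻¹)) := by
  ext y
  simp only [Qcube, mem_setOf_eq, Set.mem_pi, Set.mem_univ, forall_true_left]
  apply forall_congr'
  intro i
  by_cases h : dyadicA d w i + ((2:ℝ) ^ w.length)⁻¹ = 1
  · rw [if_pos h, Set.mem_Icc]
    constructor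
    · rintro ⟨h1, h2 | ⟨_, h3⟩⟩
      · exact ⟨h1, by linarith [h2, h.symm.le]⟩
      · exact ⟨h1, h3⟩
    · rintro ⟨h1, h2⟩; exact ⟨h1, Or.inr ⟨h, h2⟩⟩
  · rw [if_neg h, Set.mem_Ico]
    constructor
    · rintro ⟨h1, h2 | ⟨h2, _⟩⟩
      · exact ⟨h1, h2⟩
      · exact absurd h2 h
    · rintro ⟨h1, h2⟩; exact ⟨h1, Or.inl h2⟩

lemma Qcube_measurableSet (d : ℕ) (w : Wd d) : MeasurableSet (Qcube d w) := by
  rw [Qcube_eq_pi]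
  apply MeasurableSet.univ_pi
  intro i
  by_cases h : dyadicA d w i + ((2:ℝ) ^ w.length)⁻¹ = 1
  · rw [if_pos h]; exact measurableSet_Icc
  · rw [if_neg h]; exact measurableSet_Ico

lemma Qcube_volume (d : ℕ) (w : Wd d) :
    volume (Qcube d w) = ENNReal.ofReal (((2:ℝ) ^ w.length)⁻¹) ^ d := by
  rw [Qcube_eq_pi, volume_pi_pi]
  have : ∀ i : Fin d, volume (if dyadicA d w i + ((2:ℝ) ^ w.length)⁻¹ = 1
      then Set.Icc (dyadicA d w i) 1
      else Set.Ico (dyadicA d w i) (dyadicA d w i + ((2:ℝ) ^ w.length)⁻¹))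
      = ENNReal.ofReal (((2:ℝ) ^ w.length)⁻¹) := by
    intro i
    by_cases h : dyadicA d w i + ((2:ℝ) ^ w.length)⁻¹ = 1
    · rw [if_pos h, Real.volume_Icc]
      congr 1
      linarith
    · rw [if_neg h, Real.volume_Ico]
      congr 1
      ring
  rw [Finset.prod_congr rfl (fun i _ => this i), Finset.prod_const, Finset.card_univ,
    Fintype.card_fin]

/-- the sup-norm diameter bound for cubes. -/
lemma Qcube_dist_le {d : ℕ} {w : Wd d} {y z : Fin d → ℝ}
    (hy : y ∈ Qcube d w) (hz : z ∈ Qcube d w) :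
    dist y z ≤ ((2:ℝ) ^ w.length)⁻¹ := by
  rw [dist_pi_le_iff (by positivity)]
  intro i
  rw [Real.dist_eq, abs_le]
  have h1 := Qcube_mem_bounds hy i
  have h2 := Qcube_mem_bounds hz i
  constructor <;> linarith [h1.1, h1.2, h2.1, h2.2]

abbrev OmSp (d : ℕ) := (Set.Icc (0 : Fin d → ℝ) 1 : Set (Fin d → ℝ))

/-- the family of preimages of dyadic cubes in `Ω = [0,1]^d`. -/
def QS (d : ℕ) : Set (Set (OmSp d)) :=
  {s | ∃ w : Wd d, s = (Subtype.val ⁻¹' Qcube d w : Set (OmSp d))}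

lemma Qcube_nested {d : ℕ} {w v : Wd d} (hl : w.length ≤ v.length)
    {y : Fin d → ℝ} (hy : y ∈ Qcube d w) (hv : y ∈ Qcube d v) :
    Qcube d v ⊆ Qcube d w := by
  have hy1 : y ∈ Set.Icc (0 : Fin d → ℝ) 1 := Qcube_subset_Icc d w hy
  have htake : y ∈ Qcube d (v.take w.length) := by
    have := Qcube_prefix_subset d (v.take w.length) (v.drop w.length)
    rw [List.take_append_drop] at this
    exact this hv
  have hlen : (v.take w.length).length = w.length := by
    rw [List.length_take]; omega
  obtain ⟨u, _, huniq⟩ := Qcube_existsUnique hy1 w.length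
  have e1 : w = u := huniq w ⟨rfl, hy⟩
  have e2 : v.take w.length = u := huniq _ ⟨hlen, htake⟩
  rw [e1, ← e2]
  nth_rewrite 1 [← List.take_append_drop w.length v]
  exact Qcube_prefix_subset d _ _

lemma isPiSystem_QS (d : ℕ) : IsPiSystem (QS d) := by
  rintro s ⟨w, rfl⟩ t ⟨v, rfl⟩ hne
  obtain ⟨y, hyw, hyv⟩ := hne
  rcases le_total w.length v.length with hl | hl
  · refine ⟨v, ?_⟩
    rw [Set.inter_eq_self_of_subset_right]
    exact fun z hz => Qcube_nested hl hyw hyv hz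
  · refine ⟨w, ?_⟩
    rw [Set.inter_eq_self_of_subset_left]
    exact fun z hz => Qcube_nested hl hyv hyw hz

lemma measurableSet_QS {d : ℕ} {s : Set (OmSp d)} (hs : s ∈ QS d) : MeasurableSet s := by
  obtain ⟨w, rfl⟩ := hs
  exact (Qcube_measurableSet d w).preimage measurable_subtype_coe

lemma generateFrom_QS (d : ℕ) :
    (inferInstance : MeasurableSpace (OmSp d)) = MeasurableSpace.generateFrom (QS d) := by
  apply le_antisymm
  · -- every measurable set is generated by cubes: enough to generate opens
    conv_lhs => rw [BorelSpace.measurable_eq (α := OmSp d)]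
    apply MeasurableSpace.generateFrom_le
    intro U hU
    obtain ⟨V, hV, rfl⟩ := isOpen_induced_iff.mp hU
    -- U = union of cube-preimages contained in it
    have key : (Subtype.val ⁻¹' V : Set (OmSp d))
        = ⋃ w ∈ {w : Wd d | Qcube d w ⊆ V}, (Subtype.val ⁻¹' Qcube d w : Set (OmSp d)) := by
      ext y
      simp only [Set.mem_preimage, Set.mem_iUnion, Set.mem_setOf_eq]
      constructor
      · intro hy
        obtain ⟨ε, hε, hball⟩ := Metric.isOpen_iff.mp hV _ hy
        obtain ⟨k, hk⟩ : ∃ k : ℕ, ((2:ℝ) ^ k)⁻¹ < ε := by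
          obtain ⟨k, hk⟩ := pow_unbounded_of_one_lt ε⁻¹ (by norm_num : (1:ℝ) < 2)
          exact ⟨k, by rw [inv_lt_comm₀ (by positivity) hε]; exact hk⟩
        obtain ⟨w, ⟨hwl, hwy⟩, _⟩ := Qcube_existsUnique y.2 k
        refine ⟨w, ?_, hwy⟩
        intro z hz
        apply hball
        rw [Metric.mem_ball]
        calc dist z (y : Fin d → ℝ) ≤ ((2:ℝ) ^ w.length)⁻¹ := Qcube_dist_le hz hwy
          _ < ε := by rw [hwl]; exact hk
      · rintro ⟨w, hw, hyw⟩
        exact hw hyw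
    rw [key]
    apply MeasurableSet.biUnion (Set.to_countable _)
    intro w _
    exact MeasurableSpace.measurableSet_generateFrom ⟨w, rfl⟩
  · apply MeasurableSpace.generateFrom_le
    intro s hs
    exact measurableSet_QS hs

lemma measurable_eval_Pt (d : ℕ) (a : Lam d) : Measurable fun p : Pt d => p a :=
  (EuclideanSpace.proj a).continuous.measurable

lemma measurableSet_simplex (d : ℕ) : MeasurableSet (simplexSet d) := by
  have h1 : MeasurableSet {p : Pt d | ∀ a, 0 ≤ p a} := by
    rw [show {p : Pt d | ∀ a, 0 ≤ p a} = ⋂ a, {p : Pt d | 0 ≤ p a} by ext p; simp]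
    exact MeasurableSet.iInter fun a =>
      measurableSet_le measurable_const (measurable_eval_Pt d a)
  have h2 : MeasurableSet {p : Pt d | (∑ a, p a) = 1} := by
    have : Measurable fun p : Pt d => ∑ a, p a :=
      Finset.measurable_sum _ fun a _ => measurable_eval_Pt d a
    exact this (measurableSet_singleton 1)
  exact h1.inter h2

lemma sigmaMeas_compl_simplex (d : ℕ) : sigmaMeas d (simplexSet d)ᶜ = 0 := by
  rw [sigmaMeas, Measure.smul_apply,
    Measure.restrict_apply (measurableSet_simplex d).compl]
  simp

/-- `σ` is invariant under coordinate permutations. -/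
lemma sigmaMeas_map_perm (d : ℕ) (τ : Lam d ≃ Lam d) :
    (sigmaMeas d).map (fun p : Pt d => (LinearIsometryEquiv.piLpCongrLeft 2 ℝ ℝ τ : Pt d → Pt d) p)
      = sigmaMeas d := by
  set T := (LinearIsometryEquiv.piLpCongrLeft 2 ℝ ℝ τ)
  have hTapp : ∀ (p : Pt d) (a : Lam d), (T : Pt d → Pt d) p a = p (τ.symm a) := fun _ _ => rfl
  have hTmeas : Measurable (T : Pt d → Pt d) := T.continuous.measurable
  have hTiso : Isometry (T.symm : Pt d → Pt d) := T.symm.isometry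
  have hTpre : ∀ s : Set (Pt d), (T : Pt d → Pt d) ⁻¹' s = (T.symm : Pt d → Pt d) '' s := by
    intro s
    ext x
    constructor
    · intro hx
      exact ⟨(T : Pt d → Pt d) x, hx, T.symm_apply_apply x⟩
    · rintro ⟨z, hz, rfl⟩
      simpa using hz
  have hS : (T : Pt d → Pt d) ⁻¹' (simplexSet d) = simplexSet d := by
    ext p
    simp only [Set.mem_preimage, simplexSet, Set.mem_setOf_eq]
    have hsum : ∑ a, (T : Pt d → Pt d) p a = ∑ a, p a := by
      simp only [hTapp]
      exact Equiv.sum_comp τ.symm (fun a => p a)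
    constructor
    · rintro ⟨h1, h2⟩
      refine ⟨fun a => ?_, by rw [← hsum]; exact h2⟩
      have := h1 (τ a)
      rwa [hTapp, Equiv.symm_apply_apply] at this
    · rintro ⟨h1, h2⟩
      exact ⟨fun a => by rw [hTapp]; exact h1 _, by rw [hsum]; exact h2⟩
  apply Measure.ext
  intro s hs
  rw [Measure.map_apply hTmeas hs, sigmaMeas, Measure.smul_apply, Measure.smul_apply,
    Measure.restrict_apply hs, Measure.restrict_apply (hTmeas hs)]
  congr 1
  have key : (T : Pt d → Pt d) ⁻¹' s ∩ simplexSet d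
      = (T.symm : Pt d → Pt d) '' (s ∩ simplexSet d) := by
    conv_lhs => rw [← hS]
    rw [← Set.preimage_inter, hTpre]
  rw [key, hTiso.hausdorffMeasure_image (Or.inr T.symm.surjective)]

lemma sigmaMeas_ae_simplex (d : ℕ) : ∀ᵐ p ∂(sigmaMeas d), p ∈ simplexSet d := by
  rw [MeasureTheory.ae_iff]
  have h := sigmaMeas_compl_simplex d
  rw [show {a | ¬ a ∈ simplexSet d} = (simplexSet d)ᶜ from rfl]
  exact h

lemma sigmaMeas_integrable_eval (d : ℕ) [IsProbabilityMeasure (sigmaMeas d)] (a : Lam d) :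
    Integrable (fun p : Pt d => p a) (sigmaMeas d) := by
  apply Integrable.mono' (integrable_const (1:ℝ)) (measurable_eval_Pt d a).aestronglyMeasurable
  filter_upwards [sigmaMeas_ae_simplex d] with p hp
  rw [Real.norm_eq_abs, abs_le]
  refine ⟨by linarith [hp.1 a], ?_⟩
  calc p a ≤ ∑ b, p b := Finset.single_le_sum (fun b _ => hp.1 b) (Finset.mem_univ a)
    _ = 1 := hp.2

lemma sigmaMeas_integral_eval (d : ℕ) [IsProbabilityMeasure (sigmaMeas d)] (a : Lam d) :
    ∫ p, p a ∂(sigmaMeas d) = ((2:ℝ) ^ d)⁻¹ := by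
  have hswap : ∀ b : Lam d, ∫ p, p b ∂(sigmaMeas d) = ∫ p, p a ∂(sigmaMeas d) := by
    intro b
    set τ := Equiv.swap a b
    set T := (LinearIsometryEquiv.piLpCongrLeft 2 ℝ ℝ τ)
    have h1 : ∫ p, p b ∂(sigmaMeas d) = ∫ p, p b ∂((sigmaMeas d).map (T : Pt d → Pt d)) := by
      rw [sigmaMeas_map_perm d τ]
    rw [h1, integral_map T.continuous.measurable.aemeasurable
      (measurable_eval_Pt d b).aestronglyMeasurable]
    congr 1
    funext p
    show (T : Pt d → Pt d) p b = p a
    have : (T : Pt d → Pt d) p b = p (τ.symm b) := rfl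
    rw [this]
    rw [show τ.symm = τ from Equiv.symm_swap a b]
    exact congrArg p (Equiv.swap_apply_right a b)
  have hsum : ∑ b : Lam d, ∫ p, p b ∂(sigmaMeas d) = 1 := by
    rw [← integral_finset_sum _ (fun b _ => sigmaMeas_integrable_eval d b)]
    have : ∫ p, ∑ b, p b ∂(sigmaMeas d) = ∫ (_ : Pt d), (1:ℝ) ∂(sigmaMeas d) := by
      apply integral_congr_ae
      filter_upwards [sigmaMeas_ae_simplex d] with p hp
      exact hp.2
    rw [this]
    simp
  have hcard : (Fintype.card (Lam d) : ℝ) = 2 ^ d := by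
    rw [show Fintype.card (Lam d) = 2 ^ d by simp [Fintype.card_fun]]
    push_cast
    ring
  rw [Finset.sum_congr rfl (fun b _ => hswap b), Finset.sum_const, Finset.card_univ,
    nsmul_eq_mul, hcard] at hsum
  have h2 : (0:ℝ) < 2 ^ d := by positivity
  field_simp at hsum ⊢
  linarith

lemma labelFrom_eq_prod (d : ℕ) (x : Wd d → Pt d) (w : Wd d) : ∀ pre,
    labelFrom d x pre w = ∏ j ∈ Finset.range w.length,
      x (pre ++ w.take j) (w.getD j (fun _ => false)) := by
  induction w with
  | nil => intro pre; simp [labelFrom]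
  | cons a t ih =>
    intro pre
    rw [labelFrom, ih (pre ++ [a]), List.length_cons, Finset.prod_range_succ']
    rw [mul_comm]
    congr 1
    · apply Finset.prod_congr rfl
      intro j _
      rw [List.take_succ_cons, List.getD_cons_succ, List.append_assoc]
      rfl
    · simp

lemma label_eq_prod (d : ℕ) (x : Wd d → Pt d) (w : Wd d) :
    label d x w = ∏ j ∈ Finset.range w.length,
      x (w.take j) (w.getD j (fun _ => false)) := by
  rw [label, labelFrom_eq_prod]
  simp

lemma measurable_label (d : ℕ) (w : Wd d) : Measurable fun x : Wd d → Pt d => label d x w := by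
  simp only [label_eq_prod]
  apply Finset.measurable_prod
  intro j _
  exact (measurable_eval_Pt d (w.getD j (fun _ => false))).comp (measurable_pi_apply (w.take j))

lemma pi_integral_prod (d : ℕ) [IsProbabilityMeasure (sigmaMeas d)]
    {ι : Type*} [Fintype ι] (f : ι → Pt d → ℝ) :
    ∫ y : ι → Pt d, ∏ p, f p (y p) ∂(Measure.pi fun _ => sigmaMeas d)
      = ∏ p, ∫ q, f p q ∂(sigmaMeas d) := by
  letI : MeasureSpace (Pt d) := ⟨sigmaMeas d⟩
  haveI : SigmaFinite (volume : Measure (Pt d)) :=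
    (inferInstance : SigmaFinite (sigmaMeas d))
  have h := MeasureTheory.integral_fintype_prod_eq_prod (𝕜 := ℝ) (E := fun _ => Pt d) f
    (μ := fun _ => sigmaMeas d)
  exact h

lemma integral_label (d : ℕ) [IsProbabilityMeasure (sigmaMeas d)]
    (P : Measure (Wd d → Pt d)) [IsProbabilityMeasure P]
    (hP : ∀ F : Finset (Wd d),
      P.map (fun x (w : F) => x (w : Wd d)) = Measure.pi fun _ : F => sigmaMeas d)
    (w : Wd d) :
    ∫ x, label d x w ∂P = (((2:ℝ) ^ d)⁻¹) ^ w.length := by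
  classical
  set k := w.length with hk
  set Fw : Finset (Wd d) := (Finset.range k).image (fun j => w.take j) with hFw
  have hinj : Set.InjOn (fun j => w.take j) (Finset.range k) := by
    intro j1 h1 j2 h2 he
    have l1 : (w.take j1).length = j1 := by
      rw [List.length_take]; simp at h1; omega
    have l2 : (w.take j2).length = j2 := by
      rw [List.length_take]; simp at h2; omega
    have := congrArg List.length he
    simp only [l1, l2] at this
    exact this
  have hcard : Fw.card = k := by
    rw [hFw, Finset.card_image_of_injOn hinj, Finset.card_range]
  set db : Lam d := (fun _ => false) with hdb
  set g : (Fw → Pt d) → ℝ := fun y => ∏ p : Fw, y p (w.getD (p : Wd d).length db) with hg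
  have hgmeas : Measurable g := by
    apply Finset.measurable_prod
    intro p _
    exact (measurable_eval_Pt d _).comp (measurable_pi_apply p)
  have hres : Measurable (fun x : Wd d → Pt d => fun p : Fw => x (p : Wd d)) :=
    measurable_pi_lambda _ fun p => measurable_pi_apply _
  have hcomp : (fun x : Wd d → Pt d => label d x w)
      = fun x => g (fun p : Fw => x (p : Wd d)) := by
    funext x
    show label d x w = ∏ p : Fw, x (p : Wd d) (w.getD (p : Wd d).length db)
    rw [label_eq_prod,
      Finset.prod_coe_sort Fw (fun p => x p (w.getD p.length db)),
      hFw, Finset.prod_image hinj]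
    apply Finset.prod_congr rfl
    intro j hj
    have : (w.take j).length = j := by
      rw [List.length_take]
      simp only [Finset.mem_range] at hj
      omega
    rw [this]
  rw [hcomp, ← integral_map hres.aemeasurable hgmeas.aestronglyMeasurable, hP Fw]
  have hpi : ∫ y : Fw → Pt d, g y ∂(Measure.pi fun _ : Fw => sigmaMeas d)
      = ∏ p : Fw, ∫ q : Pt d, q (w.getD (p : Wd d).length db) ∂(sigmaMeas d) :=
    pi_integral_prod d (ι := Fw) (fun p (q : Pt d) => q (w.getD (p : Wd d).length db))
  rw [hpi]
  have : ∀ p : Fw, ∫ q : Pt d, q (w.getD (p : Wd d).length db) ∂(sigmaMeas d) = ((2:ℝ)^d)⁻¹ :=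
    fun p => sigmaMeas_integral_eval d _
  rw [Finset.prod_congr rfl (fun p _ => this p), Finset.prod_const, Finset.card_univ,
    Fintype.card_coe, hcard]


lemma upperSemicontinuous_measure_closed {Ω : Type*} [MeasurableSpace Ω] [MetricSpace Ω]
    [OpensMeasurableSpace Ω] {F : Set Ω} (hF : IsClosed F) :
    UpperSemicontinuous (fun μ : ProbabilityMeasure Ω => (μ : Measure Ω) F) := by
  intro μ y hy
  have key : Filter.limsup (fun ν : ProbabilityMeasure Ω => (ν : Measure Ω) F) (nhds μ)
      ≤ (μ : Measure Ω) F :=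
    ProbabilityMeasure.limsup_measure_closed_le_of_tendsto (L := nhds μ) (μs := id)
      tendsto_id hF
  exact Filter.eventually_lt_of_limsup_lt (lt_of_le_of_lt key hy)

lemma measurable_eval_measure (d : ℕ) {B : Set (OmSp d)} (hB : MeasurableSet B) :
    Measurable (fun μ : ProbabilityMeasure (OmSp d) => (μ : Measure (OmSp d)) B) := by
  haveI : BorelSpace (ProbabilityMeasure (OmSp d)) := ⟨rfl⟩
  have hclosed : ∀ F : Set (OmSp d), IsClosed F →
      Measurable (fun μ : ProbabilityMeasure (OmSp d) => (μ : Measure (OmSp d)) F) := by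
    intro F hF
    exact (upperSemicontinuous_measure_closed hF).measurable
  have hcompl : ∀ t : Set (OmSp d), MeasurableSet t →
      Measurable (fun μ : ProbabilityMeasure (OmSp d) => (μ : Measure (OmSp d)) t) →
      Measurable (fun μ : ProbabilityMeasure (OmSp d) => (μ : Measure (OmSp d)) tᶜ) := by
    intro t ht hmeas
    have : (fun μ : ProbabilityMeasure (OmSp d) => (μ : Measure (OmSp d)) tᶜ)
        = fun μ : ProbabilityMeasure (OmSp d) => 1 - (μ : Measure (OmSp d)) t := by
      funext μ
      rw [measure_compl ht (measure_ne_top _ _), measure_univ]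
    rw [this]
    exact Measurable.const_sub hmeas 1
  refine MeasurableSpace.induction_on_inter
    (C := fun B _ => Measurable (fun μ : ProbabilityMeasure (OmSp d) => (μ : Measure (OmSp d)) B))
    (BorelSpace.measurable_eq (α := OmSp d)) isPiSystem_isOpen ?_ ?_ ?_ ?_ B hB
  · simpa using measurable_const
  · intro U hU
    have : (fun μ : ProbabilityMeasure (OmSp d) => (μ : Measure (OmSp d)) U)
        = fun μ : ProbabilityMeasure (OmSp d) => (μ : Measure (OmSp d)) (Uᶜ)ᶜ := by
      simp
    rw [this]
    exact hcompl _ (IsOpen.measurableSet (α := OmSp d) hU).compl (hclosed _ (isClosed_compl_iff.mpr hU))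
  · intro t ht ih
    exact hcompl t ht ih
  · intro f hdisj hmeas ih
    have : (fun μ : ProbabilityMeasure (OmSp d) => (μ : Measure (OmSp d)) (⋃ i, f i))
        = fun μ : ProbabilityMeasure (OmSp d) => ∑' i, (μ : Measure (OmSp d)) (f i) := by
      funext μ
      exact measure_iUnion hdisj hmeas
    rw [this]
    exact Measurable.ennreal_tsum ih

/-- If `ν` is a Borel probability measure on `P([0,1]^d)` whose
finite-dimensional distributions of dyadic-cube measures agree with those of the labels under
`ℙ`, then for every Borel `E ⊆ [0,1]^d`, `μ ↦ μ(E)` is `ν`-measurable with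
`∫ μ(E) dν(μ) = λ_d(E)`. -/
theorem stmt5 (d : ℕ) (hd : 1 ≤ d) (P : Measure (Wd d → Pt d)) [IsProbabilityMeasure P]
    (hP : ∀ F : Finset (Wd d),
      P.map (fun x (w : F) => x (w : Wd d)) = Measure.pi fun _ : F => sigmaMeas d)
    (ν : Measure (ProbabilityMeasure (Set.Icc (0 : Fin d → ℝ) 1))) [IsProbabilityMeasure ν]
    (hν : ∀ (F : Finset (Wd d)) (A : Set (F → ℝ)), MeasurableSet A →
      ν {μ | (fun w : F =>
          ((μ : Measure (Set.Icc (0 : Fin d → ℝ) 1))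
            (Subtype.val ⁻¹' Qcube d (w : Wd d))).toReal) ∈ A} =
        P {x | (fun w : F => label d x (w : Wd d)) ∈ A})
    (E : Set (Fin d → ℝ)) (hE : MeasurableSet E) (hE1 : E ⊆ Set.Icc 0 1) :
    AEMeasurable (fun μ : ProbabilityMeasure (Set.Icc (0 : Fin d → ℝ) 1) =>
      ((μ : Measure (Set.Icc (0 : Fin d → ℝ) 1)) (Subtype.val ⁻¹' E)).toReal) ν ∧
    ∫ μ, ((μ : Measure (Set.Icc (0 : Fin d → ℝ) 1)) (Subtype.val ⁻¹' E)).toReal ∂ν =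
      (volume E).toReal := by
  classical
  -- `σ` is a probability measure (from `hP` at the singleton `{[]}`)
  haveI hσprob : IsProbabilityMeasure (sigmaMeas d) := by
    constructor
    have hf : Measurable (fun x : Wd d → Pt d => fun w : ({([] : Wd d)} : Finset (Wd d)) => x (w : Wd d)) :=
      measurable_pi_lambda _ fun w => measurable_pi_apply _
    have h2 : (P.map (fun x : Wd d → Pt d => fun w : ({([] : Wd d)} : Finset (Wd d)) => x (w : Wd d))) Set.univ = 1 := by
      rw [Measure.map_apply hf MeasurableSet.univ, Set.preimage_univ, measure_univ]
    rw [hP {([] : Wd d)}] at h2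
    haveI : Unique {x : Wd d // x ∈ ({([] : Wd d)} : Finset (Wd d))} :=
      ⟨⟨⟨[], Finset.mem_singleton_self []⟩⟩, fun a => Subtype.ext (Finset.mem_singleton.mp a.2)⟩
    have hmp := (measurePreserving_funUnique (sigmaMeas d)
      {x : Wd d // x ∈ ({([] : Wd d)} : Finset (Wd d))}).map_eq
    rw [← hmp, Measure.map_apply (MeasurableEquiv.funUnique _ _).measurable MeasurableSet.univ,
      Set.preimage_univ]
    convert h2 using 2
    congr 1
    exact Subsingleton.elim _ _
  set PM := ProbabilityMeasure (OmSp d) with hPM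
  -- the measurability part
  have hmeasE : Measurable (fun μ : PM => ((μ : Measure (OmSp d)) (Subtype.val ⁻¹' E)).toReal) :=
    (measurable_eval_measure d (hE.preimage measurable_subtype_coe)).ennreal_toReal
  refine ⟨hmeasE.aemeasurable, ?_⟩
  -- the averaged measure `m`
  set m : Measure (OmSp d) := Measure.ofMeasurable
    (fun B _ => ∫⁻ μ : PM, (μ : Measure (OmSp d)) B ∂ν)
    (by simp only [measure_empty]; exact lintegral_zero)
    (by
      intro f hmeas hdisj
      show (∫⁻ μ : PM, (μ : Measure (OmSp d)) (⋃ i, f i) ∂ν)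
          = ∑' i, ∫⁻ μ : PM, (μ : Measure (OmSp d)) (f i) ∂ν
      have h1 : ∀ μ : PM, (μ : Measure (OmSp d)) (⋃ i, f i) = ∑' i, (μ : Measure (OmSp d)) (f i) :=
        fun μ => measure_iUnion hdisj hmeas
      rw [lintegral_congr h1]
      exact lintegral_tsum fun i => (measurable_eval_measure d (hmeas i)).aemeasurable)
    with hm
  have hmB : ∀ B : Set (OmSp d), MeasurableSet B →
      m B = ∫⁻ μ : PM, (μ : Measure (OmSp d)) B ∂ν := fun B hB =>
    Measure.ofMeasurable_apply B hB
  have hm_ne_top : ∀ B : Set (OmSp d), MeasurableSet B → m B ≠ ⊤ := by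
    intro B hB
    rw [hmB B hB]
    refine ne_top_of_le_ne_top (by simp : (1 : ENNReal) ≠ ⊤) ?_
    calc ∫⁻ μ : PM, (μ : Measure (OmSp d)) B ∂ν ≤ ∫⁻ _ : PM, 1 ∂ν :=
        lintegral_mono fun μ => prob_le_one
      _ = 1 := by rw [lintegral_const, measure_univ, one_mul]
  -- the reference measure `T` (Lebesgue transported to the subtype)
  have hemb : MeasurableEmbedding (Subtype.val : OmSp d → (Fin d → ℝ)) :=
    MeasurableEmbedding.subtype_coe measurableSet_Icc
  set T : Measure (OmSp d) := Measure.comap Subtype.val volume with hT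
  have hTap : ∀ B : Set (OmSp d), T B = volume (Subtype.val '' B) := fun B =>
    hemb.comap_apply volume B
  -- value of `m` on cube preimages via `hν` and `integral_label`
  have hcube_val : ∀ w : Wd d, m (Subtype.val ⁻¹' Qcube d w)
      = ENNReal.ofReal ((((2:ℝ) ^ d)⁻¹) ^ w.length) := by
    intro w
    set B : Set (OmSp d) := Subtype.val ⁻¹' Qcube d w with hB
    have hBmeas : MeasurableSet B := (Qcube_measurableSet d w).preimage measurable_subtype_coe
    set g : PM → ℝ := fun μ => ((μ : Measure (OmSp d)) B).toReal with hg
    have hgmeas : Measurable g := (measurable_eval_measure d hBmeas).ennreal_toReal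
    -- distribution transfer
    have htrans : ∀ S : Set ℝ, MeasurableSet S → ν (g ⁻¹' S) = P ((fun x => label d x w) ⁻¹' S) := by
      intro S hS
      have hA : MeasurableSet ((fun f : ({w} : Finset (Wd d)) → ℝ =>
          f ⟨w, Finset.mem_singleton_self w⟩) ⁻¹' S) := (measurable_pi_apply _) hS
      exact hν {w} _ hA
    have hmapeq : ν.map g = P.map (fun x => label d x w) := by
      apply Measure.ext
      intro S hS
      rw [Measure.map_apply hgmeas hS, Measure.map_apply (measurable_label d w) hS,
        htrans S hS]
    have hint : ∫ μ : PM, g μ ∂ν = ∫ x, label d x w ∂P := by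
      have h1 : ∫ μ : PM, g μ ∂ν = ∫ r : ℝ, r ∂(ν.map g) :=
        (integral_map hgmeas.aemeasurable aestronglyMeasurable_id).symm
      have h2 : ∫ x, label d x w ∂P = ∫ r : ℝ, r ∂(P.map (fun x => label d x w)) :=
        (integral_map (measurable_label d w).aemeasurable aestronglyMeasurable_id).symm
      rw [h1, h2, hmapeq]
    rw [integral_label d P hP w] at hint
    have htoReal : ∫ μ : PM, g μ ∂ν = (m B).toReal := by
      rw [hmB B hBmeas]
      exact integral_toReal (measurable_eval_measure d hBmeas).aemeasurable
        (Filter.Eventually.of_forall fun μ => measure_lt_top _ _)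
    rw [htoReal] at hint
    rw [← ENNReal.ofReal_toReal (hm_ne_top B hBmeas), hint]
  -- `m = T`
  have hTuniv : T Set.univ = 1 := by
    rw [hTap, Set.image_univ, Subtype.range_coe, Real.volume_Icc_pi]
    simp
  have hmuniv : m Set.univ = 1 := by
    rw [hmB _ MeasurableSet.univ]
    simp
    rw [lintegral_const, measure_univ, one_mul]
  haveI : IsFiniteMeasure m := ⟨by rw [hmuniv]; exact ENNReal.one_lt_top⟩
  have hmT : m = T := by
    apply MeasureTheory.ext_of_generate_finite (QS d) (generateFrom_QS d) (isPiSystem_QS d)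
    · rintro s ⟨w, rfl⟩
      rw [hcube_val w, hTap]
      have him : Subtype.val '' (Subtype.val ⁻¹' Qcube d w : Set (OmSp d)) = Qcube d w := by
        rw [Set.image_preimage_eq_inter_range, Subtype.range_coe,
          Set.inter_eq_self_of_subset_left (Qcube_subset_Icc d w)]
      rw [him, Qcube_volume d w]
      rw [← ENNReal.ofReal_pow (by positivity)]
      congr 1
      rw [← inv_pow, ← inv_pow, ← pow_mul, ← pow_mul, mul_comm]
    · rw [hmuniv, hTuniv]
  -- conclude
  have hBE : MeasurableSet (Subtype.val ⁻¹' E : Set (OmSp d)) :=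
    hE.preimage measurable_subtype_coe
  have h1 : ∫ μ : PM, ((μ : Measure (OmSp d)) (Subtype.val ⁻¹' E)).toReal ∂ν
      = (m (Subtype.val ⁻¹' E)).toReal := by
    rw [hmB _ hBE]
    exact integral_toReal (measurable_eval_measure d hBE).aemeasurable
      (Filter.Eventually.of_forall fun μ => measure_lt_top _ _)
  rw [h1, hmT, hTap]
  congr 2
  rw [Set.image_preimage_eq_inter_range, Subtype.range_coe,
    Set.inter_eq_self_of_subset_left hE1]
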